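/- Let k ≥ 3 and Σ = {a₁,…,a_k}. For every pattern α ∈ Π_DB(k), the 1-uniform morphism σ : ℕ* → Σ* defined by σ(x) = a_j for every x ∈ N_j is unambiguous with respect to α. -/
import Mathlib


/-- A word w over `Fin k` is a non-cyclic de Bruijn sequence of order 2 if
every length-2 word over `Fin k` occurs in w exactly once as a factor. -/
def IsDeBruijn2 {k : ℕ} (w : List (Fin k)) : Prop :=
  ∀ v : List (Fin k), v.length = 2 →
    ∃! p : ℕ, p + 2 ≤ w.length ∧ (w.drop p).take 2 = v

lemma dup_split {x : ℕ} {l : List ℕ} (h : 2 ≤ l.count x) :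
    ∃ a b c, l = a ++ x :: b ++ x :: c := by
  have hs : List.Sublist [x, x] l := (List.duplicate_iff_sublist).mp
    (List.duplicate_iff_two_le_count.mpr h)
  rcases List.cons_sublist_iff.mp hs with ⟨r₁, r₂, rfl, hx1, hx2⟩
  rcases List.append_of_mem hx1 with ⟨a, b, rfl⟩
  have hx2' : x ∈ r₂ := hx2.subset (by simp)
  rcases List.append_of_mem hx2' with ⟨b', c, rfl⟩
  exact ⟨a, b ++ b', c, by simp⟩

lemma take2_of_prefix {k : ℕ} {t r : List (Fin k)} (h : 2 ≤ t.length) :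
    (t ++ r).take 2 = t.take 2 := by
  rw [List.take_append]
  simp [Nat.sub_eq_zero_of_le h]

lemma flat_le {k : ℕ} (τ : ℕ → List (Fin k)) :
    ∀ l : List ℕ, (∀ x ∈ l, (τ x).length ≤ 1) → (l.flatMap τ).length ≤ l.length := by
  intro l
  induction l with
  | nil => simp
  | cons b s ihs =>
    intro hle
    simp only [List.flatMap_cons, List.length_append, List.length_cons]
    have h1 := hle b (by simp)
    have h2 := ihs (fun x hx => hle x (by simp [hx]))
    omega

/-- Let k ≥ 3 and let α ∈ Π_DB(k) arise from a non-cyclic de Bruijn sequence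
w of order 2 over `Fin k` via the letter-assignment f : ℕ → Fin k (each
variable of α occurring at least twice, with ⌊n_j/2⌋ variables assigned to
the letter j). Then the 1-uniform morphism σ(x) = f(x) is unambiguous with
respect to α. -/
theorem stmt_17 (k : ℕ) (hk : 3 ≤ k) (α : List ℕ)
    (w : List (Fin k)) (f : ℕ → Fin k) (hdb : IsDeBruijn2 w)
    (hw : α.map f = w) (hcount : ∀ x ∈ α, 2 ≤ α.count x)
    (hvars : ∀ j : Fin k,
      (α.toFinset.filter (fun x => f x = j)).card = w.count j / 2) :
    ∀ τ : ℕ → List (Fin k),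
      α.flatMap τ = α.flatMap (fun x => [f x]) →
        ∀ x ∈ α, τ x = [f x] := by
  intro τ hτ
  have hflat : ∀ l : List ℕ, l.flatMap (fun x => [f x]) = l.map f := by
    intro l
    induction l with
    | nil => rfl
    | cons a t ih => simp [List.flatMap_cons, ih]
  -- Step 1: each τ x has length ≤ 1
  have hle1 : ∀ x ∈ α, (τ x).length ≤ 1 := by
    intro x hx
    by_contra hlen
    push_neg at hlen
    have h2 : 2 ≤ (τ x).length := hlen
    rcases dup_split (hcount x hx) with ⟨a, b, c, hαeq⟩
    have hfl : (a ++ x :: b ++ x :: c).flatMap τ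
        = a.flatMap τ ++ (τ x ++ (b.flatMap τ ++ (τ x ++ c.flatMap τ))) := by
      simp [List.flatMap_append, List.flatMap_cons, List.append_assoc]
    set A := a.flatMap τ with hA
    set B := b.flatMap τ with hB
    set C := c.flatMap τ with hC
    have hweq : w = A ++ (τ x ++ (B ++ (τ x ++ C))) := by
      rw [← hw, ← hflat α, ← hτ, hαeq, hfl]
    have hv : ((τ x).take 2).length = 2 := by simp [h2]
    obtain ⟨p, _, hpun⟩ := hdb ((τ x).take 2) hv
    have h1 : A.length + 2 ≤ w.length ∧ (w.drop A.length).take 2 = (τ x).take 2 := by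
      constructor
      · rw [hweq]; simp; omega
      · rw [hweq, List.drop_left]; exact take2_of_prefix h2
    have h2' : (A.length + (τ x).length + B.length) + 2 ≤ w.length ∧
        (w.drop (A.length + (τ x).length + B.length)).take 2 = (τ x).take 2 := by
      have hre : w = (A ++ τ x ++ B) ++ (τ x ++ C) := by
        rw [hweq]; simp [List.append_assoc]
      constructor
      · rw [hre]; simp; omega
      · rw [hre]
        have hl : (A ++ τ x ++ B).length = A.length + (τ x).length + B.length := by simp; omega
        rw [← hl, List.drop_left, take2_of_prefix h2]
    have e1 := hpun _ h1
    have e2 := hpun _ h2'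
    omega
  -- Step 2: each τ x has length exactly 1
  have hlensum : ∀ (l : List ℕ), (∀ x ∈ l, (τ x).length ≤ 1) →
      (l.flatMap τ).length = l.length → ∀ x ∈ l, (τ x).length = 1 := by
    intro l
    induction l with
    | nil => simp
    | cons a t ih =>
      intro hle hlen
      simp only [List.flatMap_cons, List.length_append, List.length_cons] at hlen
      have hta : (τ a).length ≤ 1 := hle a (by simp)
      have htsum := flat_le τ t (fun x hx => hle x (by simp [hx]))
      have ha1 : (τ a).length = 1 := by omega
      intro x hx
      rcases List.mem_cons.mp hx with rfl | hx'
      · exact ha1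
      · exact ih (fun y hy => hle y (by simp [hy])) (by omega) x hx'
  have hlen1 : ∀ x ∈ α, (τ x).length = 1 := by
    apply hlensum α hle1
    have h := congrArg List.length hτ
    simpa [hflat α] using h
  -- Step 3: conclude
  have key : ∀ (l : List ℕ), (∀ x ∈ l, (τ x).length = 1) →
      l.flatMap τ = l.map f → ∀ x ∈ l, τ x = [f x] := by
    intro l
    induction l with
    | nil => simp
    | cons a t ih =>
      intro h1 heq
      obtain ⟨c, hc⟩ := List.length_eq_one_iff.mp (h1 a (by simp))
      rw [List.flatMap_cons, List.map_cons, hc] at heq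
      simp only [List.cons_append, List.nil_append, List.cons.injEq] at heq
      intro x hx
      rcases List.mem_cons.mp hx with rfl | hx'
      · rw [hc, heq.1]
      · exact ih (fun y hy => h1 y (by simp [hy])) heq.2 x hx'
  exact key α hlen1 (by rw [hτ, hflat α, hw, ← hw])
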